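/- For each integer q ≥ 0 define the orthonormal polynomials p_j^(q) of the measure (1−x²)^q dx on [−1,1] by p_{−1}^(q) = 0, p_0^(q) = ( ∫_{−1}^1 (1−x²)^q dx )^{−1/2}, and the recurrence x p_j^(q)(x) = b_{j+1}^(q) p_{j+1}^(q)(x) + b_j^(q) p_{j−1}^(q)(x), where b_j^(q) = (1/2)√( j(j + 2q) / ( (j+q−1/2)(j+q+1/2) ) ). Then for every n ∈ ℕ and every x ∈ [−1,1], (2n+1)/2 = ( p_n^(0)(x) )² + 2 Σ_{k=1}^n (1−x²)^k ( p_{n−k}^(k)(x) )². -/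

import Mathlib

open Filter MeasureTheory
open Polynomial

noncomputable def Leg : ℕ → Polynomial ℝ
  | 0 => 1
  | 1 => X
  | (n+2) => C (((n:ℝ)+2)⁻¹) * (C (2*(n:ℝ)+3) * (X * Leg (n+1)) - C ((n:ℝ)+1) * Leg n)

lemma leg0 : Leg 0 = 1 := rfl

lemma leg1 : Leg 1 = X := rfl

lemma cast_poly_C (r : ℕ) : (C (r:ℝ) : Polynomial ℝ) = (r : Polynomial ℝ) := by
  simp

lemma legR1 (n : ℕ) : ((n:Polynomial ℝ)+1) * Leg (n+1) =
    (2*(n:Polynomial ℝ)+1) * (X * Leg n) - (n:Polynomial ℝ) * Leg (n-1) := by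
  cases n with
  | zero => simp [Leg]
  | succ m =>
      have : Leg (m+1+1) = C (((m:ℝ)+2)⁻¹) * (C (2*(m:ℝ)+3) * (X * Leg (m+1)) - C ((m:ℝ)+1) * Leg m) := rfl
      rw [this]
      have h2 : (C (((m:ℝ)+2)) : Polynomial ℝ) * C (((m:ℝ)+2)⁻¹) = 1 := by
        rw [← map_mul]
        rw [mul_inv_cancel₀ (by positivity : ((m:ℝ)+2) ≠ 0)]
        simp
      have e1 : ((m+1 : ℕ) : Polynomial ℝ) = (m : Polynomial ℝ) + 1 := by push_cast; ring
      rw [e1]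
      have e2 : ((m:Polynomial ℝ)+1+1) = C ((m:ℝ)+2) := by
        simp [map_add, cast_poly_C, map_ofNat]
        ring
      rw [show (m+1)-1 = m from rfl]
      rw [e2, ← mul_assoc, h2, one_mul]
      have e3 : (C (2*(m:ℝ)+3) : Polynomial ℝ) = 2*(m:Polynomial ℝ)+3 := by
        simp [map_add, map_mul, cast_poly_C, map_ofNat]
      have e4 : (C ((m:ℝ)+1) : Polynomial ℝ) = (m:Polynomial ℝ)+1 := by
        simp [map_add, cast_poly_C]
      rw [e3, e4]
      ring

lemma legDeg (n : ℕ) : (Leg n).natDegree ≤ n := by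
  induction n using Nat.strong_induction_on with
  | _ n ih =>
    match n with
    | 0 => simp [Leg]
    | 1 => simp [Leg, natDegree_X_le]
    | (m+2) =>
      rw [Leg]
      refine (natDegree_mul_le).trans ?_
      simp only [natDegree_C, zero_add]
      refine (natDegree_sub_le _ _).trans ?_
      refine max_le ?_ ?_
      · refine (natDegree_mul_le).trans ?_
        simp only [natDegree_C, zero_add]
        refine (natDegree_mul_le).trans ?_
        have := ih (m+1) (by omega)
        simpa [natDegree_X] using by omega
      · refine (natDegree_mul_le).trans ?_
        have := ih m (by omega)
        simp only [natDegree_C, zero_add]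
        omega

lemma legEvalOne (n : ℕ) : (Leg n).eval 1 = 1 := by
  induction n using Nat.strong_induction_on with
  | _ n ih =>
    match n with
    | 0 => simp [Leg]
    | 1 => simp [Leg]
    | (m+2) =>
      rw [Leg]
      simp only [eval_mul, eval_C, eval_sub, eval_X, ih (m+1) (by omega), ih m (by omega)]
      field_simp
      ring

def PA (n : ℕ) : Prop := X * derivative (Leg n) =
  (n : Polynomial ℝ) * Leg n + derivative (Leg (n-1))

lemma legR2_of_PA (n : ℕ) (hA : PA n) : derivative (Leg (n+1)) =
    (2*(n:Polynomial ℝ)+1) * Leg n + derivative (Leg (n-1)) := by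
  have h := congrArg derivative (legR1 n)
  simp only [derivative_mul, derivative_sub, derivative_natCast, derivative_add,
    derivative_one, derivative_X, zero_mul, zero_add, one_mul, mul_one,
    derivative_mul, derivative_ofNat, add_zero] at h
  unfold PA at hA
  have hc : ((n : Polynomial ℝ) + 1) ≠ 0 := by
    intro hh
    have := congrArg (Polynomial.eval 0) hh
    simp at this
    have : ((n:ℝ)+1) ≠ 0 := by positivity
    simp_all
  apply mul_left_cancel₀ hc
  linear_combination h + (2*(n:Polynomial ℝ)+1) * hA

lemma legA : ∀ n, PA n := by
  have key : ∀ n, PA n ∧ PA (n+1) := by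
    intro n
    induction n with
    | zero =>
      constructor
      · unfold PA; simp [leg0]
      · unfold PA; simp [leg0, leg1]
    | succ m ih =>
      obtain ⟨h1, h2⟩ := ih
      refine ⟨h2, ?_⟩
      have r2a := legR2_of_PA m h1
      have r2b := legR2_of_PA (m+1) h2
      unfold PA at h1 h2 ⊢
      have r1 := legR1 (m+1)
      rw [show (m+1+1)-1 = m+1 from rfl]
      rw [show (m+1)-1 = m from rfl] at h2
      push_cast at r2b r1 h2 ⊢
      linear_combination X * r2b - r1 + h1 - r2a
  exact fun n => (key n).1

lemma legR2 (n : ℕ) : derivative (Leg (n+1)) =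
    (2*(n:Polynomial ℝ)+1) * Leg n + derivative (Leg (n-1)) :=
  legR2_of_PA n (legA n)

lemma legCrel (n : ℕ) : derivative (Leg (n+1)) =
    X * derivative (Leg n) + ((n:Polynomial ℝ)+1) * Leg n := by
  have h1 := legR2 n
  have h2 := legA n
  unfold PA at h2
  linear_combination h1 - h2

lemma legE (n : ℕ) : (1 - X^2) * derivative (Leg n) =
    (n:Polynomial ℝ) * Leg (n-1) - (n:Polynomial ℝ) * (X * Leg n) := by
  cases n with
  | zero => simp [leg0]
  | succ m =>
    have hA := legA (m+1)
    unfold PA at hA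
    have hC := legCrel m
    rw [show (m+1)-1 = m from rfl] at hA ⊢
    push_cast at hA ⊢
    linear_combination (1:Polynomial ℝ) * hC - X * hA

lemma legODE (n : ℕ) : (1 - X^2) * derivative (derivative (Leg n)) =
    2*(X * derivative (Leg n)) - ((n:Polynomial ℝ)*((n:Polynomial ℝ)+1)) * Leg n := by
  have h := congrArg derivative (legE n)
  simp only [derivative_mul, derivative_sub, derivative_one, derivative_X, derivative_pow,
    derivative_natCast, zero_mul, zero_add, mul_one, zero_sub, add_zero, one_mul, mul_zero,
    sub_zero, map_ofNat, Nat.cast_ofNat, pow_one] at h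
  have hA := legA n
  unfold PA at hA
  linear_combination h - (n:Polynomial ℝ) * hA

noncomputable def Zp (n k : ℕ) : Polynomial ℝ := derivative^[k] (Leg n)

lemma Zp_zero (n : ℕ) : Zp n 0 = Leg n := rfl

lemma Zp_succ (n k : ℕ) : Zp n (k+1) = derivative (Zp n k) :=
  Function.iterate_succ_apply' _ _ _

lemma Zp_high (n k : ℕ) (h : n < k) : Zp n k = 0 :=
  iterate_derivative_eq_zero (lt_of_le_of_lt (legDeg n) h)

lemma legODEk (n k : ℕ) : (1 - X^2) * Zp n (k+2) =
    (2*(k:Polynomial ℝ)+2) * (X * Zp n (k+1)) -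
      ((n:Polynomial ℝ)*((n:Polynomial ℝ)+1) - (k:Polynomial ℝ)*((k:Polynomial ℝ)+1)) * Zp n k := by
  induction k with
  | zero =>
    have h := legODE n
    simp only [Zp_succ, Zp_zero]
    push_cast
    linear_combination h
  | succ m ih =>
    have h := congrArg derivative ih
    simp only [derivative_mul, derivative_sub, derivative_one, derivative_X, derivative_pow,
      derivative_natCast, zero_mul, zero_add, mul_one, zero_sub, add_zero, one_mul, mul_zero,
      sub_zero, map_ofNat, Nat.cast_ofNat, pow_one, derivative_ofNat, derivative_add, ← Zp_succ] at h
    push_cast at h ⊢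
    linear_combination h

lemma legR2k (q n : ℕ) : Zp (n+1) (q+1) =
    (2*(n:Polynomial ℝ)+1) * Zp n q + Zp (n-1) (q+1) := by
  induction q with
  | zero =>
    simpa only [Zp_succ, Zp_zero] using legR2 n
  | succ m ih =>
    have h := congrArg derivative ih
    simp only [derivative_add, derivative_mul, derivative_natCast, derivative_ofNat,
      derivative_one, zero_mul, zero_add, mul_one, add_zero, mul_zero, ← Zp_succ] at h
    exact h

lemma legDRec (q n : ℕ) : (2*(n:Polynomial ℝ)+1) * (X * Zp n q) =
    ((n:Polynomial ℝ)+1-(q:Polynomial ℝ)) * Zp (n+1) q +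
      ((n:Polynomial ℝ)+(q:Polynomial ℝ)) * Zp (n-1) q := by
  induction q with
  | zero =>
    simp only [Zp_zero]
    push_cast
    linear_combination (-1 : Polynomial ℝ) * legR1 n
  | succ m ih =>
    have h := congrArg derivative ih
    simp only [derivative_add, derivative_mul, derivative_natCast, derivative_ofNat,
      derivative_sub, derivative_one, derivative_X, zero_mul, zero_add, mul_one, add_zero,
      one_mul, zero_sub, mul_zero, sub_zero, ← Zp_succ] at h
    have r := legR2k m n
    push_cast at h ⊢
    linear_combination h + r

noncomputable def gam (n k : ℕ) : ℝ :=
  (if k = 0 then 1 else 2) * (Nat.factorial (n-k)) / (Nat.factorial (n+k))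

noncomputable def tav (n k : ℕ) : ℝ := 2 * (Nat.factorial (n-k)) / (Nat.factorial (n+k))

noncomputable def gterm (n k : ℕ) : Polynomial ℝ := C (gam n k) * ((1-X^2)^k * (Zp n k)^2)

noncomputable def tterm (n k : ℕ) : Polynomial ℝ :=
  C (tav n k) * ((1-X^2)^k * (Zp n k * Zp n (k+1)))

lemma dg0 (n : ℕ) : derivative (gterm n 0) = tterm n 0 := by
  unfold gterm tterm
  simp only [pow_zero, one_mul, derivative_mul, derivative_C, zero_mul, zero_add, sq,
    Zp_succ, Zp_zero]
  have hcc : (C (tav n 0) : Polynomial ℝ) = 2 * C (gam n 0) := by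
    rw [show tav n 0 = 2 * gam n 0 by unfold tav gam; simp; ring, map_mul, map_ofNat]
  linear_combination (-(Leg n * derivative (Leg n))) * hcc

lemma tav_rel (n k : ℕ) (hk : k < n) :
    tav n (k+1) * ((n:ℝ)*((n:ℝ)+1) - (k:ℝ)*((k:ℝ)+1)) = tav n k := by
  obtain ⟨d, rfl⟩ : ∃ d, n = k + d + 1 := ⟨n - k - 1, by omega⟩
  unfold tav
  rw [show k + d + 1 - (k+1) = d from by omega, show k + d + 1 - k = d + 1 from by omega,
    show k + d + 1 + (k + 1) = (k + d + 1 + k) + 1 from by omega]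
  rw [Nat.factorial_succ (k+d+1+k), Nat.factorial_succ d]
  have h1 : ((Nat.factorial (k+d+1+k)) : ℝ) ≠ 0 := Nat.cast_ne_zero.mpr (Nat.factorial_ne_zero _)
  push_cast
  field_simp
  ring

lemma dgk (n k : ℕ) (hk : k < n) :
    derivative (gterm n (k+1)) = tterm n (k+1) - tterm n k := by
  unfold gterm tterm
  rw [show gam n (k+1) = tav n (k+1) from by unfold gam tav; simp]
  have h := legODEk n k
  have bridge : ((n:Polynomial ℝ)*((n:Polynomial ℝ)+1) - (k:Polynomial ℝ)*((k:Polynomial ℝ)+1))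
      = C ((n:ℝ)*((n:ℝ)+1) - (k:ℝ)*((k:ℝ)+1)) := by
    simp only [map_sub, map_mul, map_add, map_one, cast_poly_C]
  have e2 : C (tav n (k+1)) *
      ((n:Polynomial ℝ)*((n:Polynomial ℝ)+1) - (k:Polynomial ℝ)*((k:Polynomial ℝ)+1))
      = C (tav n k) := by
    rw [bridge, ← map_mul, tav_rel n k hk]
  simp only [derivative_mul, derivative_C, zero_mul, zero_add, derivative_pow, derivative_sub,
    derivative_one, derivative_X, sq, zero_sub, mul_one, cast_poly_C, ← Zp_succ] at *
  push_cast
  linear_combination (C (tav n (k+1)) * (1-X^2)^k * Zp n (k+1)) * h +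
    (-((1-X^2)^k * Zp n k * Zp n (k+1))) * e2

noncomputable def G (n : ℕ) : Polynomial ℝ := ∑ k ∈ Finset.range (n+1), gterm n k

lemma G_deriv (n : ℕ) : derivative (G n) = 0 := by
  unfold G
  rw [derivative_sum]
  rw [Finset.sum_range_succ']
  have h1 : ∀ k ∈ Finset.range n, derivative (gterm n (k+1)) = tterm n (k+1) - tterm n k := by
    intro k hk
    exact dgk n k (Finset.mem_range.mp hk)
  rw [Finset.sum_congr rfl h1, Finset.sum_range_sub (fun k => tterm n k), dg0]
  have : tterm n n = 0 := by
    unfold tterm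
    rw [Zp_high n (n+1) (by omega)]
    ring
  rw [this]
  ring

lemma G_eq_one (n : ℕ) : G n = 1 := by
  have h := eq_C_of_derivative_eq_zero (G_deriv n)
  have hev : (G n).eval 1 = 1 := by
    unfold G
    rw [eval_finset_sum, Finset.sum_range_succ']
    have h0 : (gterm n 0).eval 1 = 1 := by
      unfold gterm
      simp [gam, Zp_zero, legEvalOne n, Nat.factorial_ne_zero]
    have hz : ∀ k ∈ Finset.range n, (gterm n (k+1)).eval 1 = 0 := by
      intro k _
      unfold gterm
      simp
    rw [Finset.sum_congr rfl hz, h0]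
    simp
  rw [h] at hev ⊢
  simp at hev
  rw [hev]
  simp

lemma G_eval (n : ℕ) (x : ℝ) :
    ∑ k ∈ Finset.range (n+1), gam n k * ((1-x^2)^k * ((Zp n k).eval x)^2) = 1 := by
  have h := congrArg (Polynomial.eval x) (G_eq_one n)
  unfold G at h
  rw [eval_finset_sum] at h
  simpa [gterm] using h

lemma legCoeffTop (n : ℕ) : (Leg n).coeff n =
    ((Nat.factorial (2*n)):ℝ) / (2^n * ((Nat.factorial n):ℝ)^2) := by
  induction n with
  | zero => simp [leg0]
  | succ m ih =>
    have h := congrArg (fun p => Polynomial.coeff p (m+1)) (legR1 m)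
    simp only [← cast_poly_C] at h
    have h2m : (2:Polynomial ℝ) * C ((m:ℝ)) + 1 = C (2*(m:ℝ)+1) := by
      simp [map_add, map_mul, map_ofNat]
    rw [h2m] at h
    simp only [coeff_sub, coeff_C_mul, coeff_add, coeff_X_mul] at h
    have hlow : (Leg (m-1)).coeff (m+1) = 0 := by
      apply coeff_eq_zero_of_natDegree_lt
      exact lt_of_le_of_lt (legDeg (m-1)) (by omega)
    have hCadd : (C ((m:ℝ)) + 1 : Polynomial ℝ) = C ((m:ℝ)+1) := by simp
    rw [hlow, hCadd, coeff_C_mul] at h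
    rw [ih] at h
    have hne : ((m:ℝ)+1) ≠ 0 := by positivity
    have hfact : ((Nat.factorial (2*m)):ℝ) ≠ 0 := Nat.cast_ne_zero.mpr (Nat.factorial_ne_zero _)
    have hfac2 : ((Nat.factorial m):ℝ) ≠ 0 := Nat.cast_ne_zero.mpr (Nat.factorial_ne_zero _)
    have key : (Leg (m+1)).coeff (m+1) = (2*(m:ℝ)+1)/((m:ℝ)+1) *
        (((Nat.factorial (2*m)):ℝ) / (2^m * ((Nat.factorial m):ℝ)^2)) := by
      field_simp at h ⊢
      linarith [h]
    rw [key]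
    rw [show 2*(m+1) = (2*m+1)+1 from by omega, Nat.factorial_succ ((2*m)+1),
      Nat.factorial_succ (2*m), Nat.factorial_succ m]
    push_cast
    field_simp
    ring

lemma ZqSelf (q : ℕ) : Zp q q =
    C (((Nat.factorial q):ℝ) * ((Nat.factorial (2*q)):ℝ) / (2^q * ((Nat.factorial q):ℝ)^2)) := by
  have hdeg : (derivative^[q] (Leg q)).natDegree ≤ 0 := by
    refine (natDegree_iterate_derivative _ _).trans ?_
    have := legDeg q
    omega
  have := eq_C_of_natDegree_le_zero hdeg
  unfold Zp
  rw [this, coeff_iterate_derivative, zero_add, Nat.descFactorial_self, legCoeffTop q,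
    nsmul_eq_mul]
  ring_nf

lemma Ival (q : ℕ) : (∫ x in (-1:ℝ)..1, (1 - x^2)^q) =
    2*4^q*((Nat.factorial q):ℝ)^2/((Nat.factorial (2*q+1)):ℝ) := by
  induction q with
  | zero => norm_num
  | succ m ih =>
    have hcont : ∀ r : ℕ, Continuous (fun x : ℝ => (1-x^2)^r) := by
      intro r
      exact (continuous_const.sub (continuous_pow 2)).pow r
    -- FTC
    set P : Polynomial ℝ := X * (1-X^2)^(m+1) with hP
    have hder : ∀ x : ℝ, HasDerivAt (fun y : ℝ => P.eval y) (P.derivative.eval x) x :=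
      fun x => P.hasDerivAt x
    have hfc : ∀ x : ℝ, (P.derivative).eval x =
        (2*(m:ℝ)+3)*(1-x^2)^(m+1) - (2*(m:ℝ)+2)*(1-x^2)^m := by
      intro x
      rw [hP]
      simp only [derivative_mul, derivative_X, derivative_pow, derivative_sub, derivative_one,
        derivative_X_pow, one_mul, zero_sub, mul_one, eval_add, eval_mul, eval_pow, eval_sub,
        eval_one, eval_X, eval_neg, eval_natCast, eval_mul, eval_ofNat, cast_poly_C]
      push_cast
      ring
    have hint : (∫ x in (-1:ℝ)..1, ((2*(m:ℝ)+3)*(1-x^2)^(m+1) - (2*(m:ℝ)+2)*(1-x^2)^m)) =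
        P.eval 1 - P.eval (-1) := by
      rw [← intervalIntegral.integral_eq_sub_of_hasDerivAt (fun x _ => hder x) ?_]
      · congr 1
        ext x
        rw [hfc x]
      · apply Continuous.intervalIntegrable
        exact P.derivative.continuous_aeval
    have hPval : P.eval 1 - P.eval (-1) = 0 := by
      simp [hP]
    rw [hPval] at hint
    rw [intervalIntegral.integral_sub ((by fun_prop : Continuous (fun x : ℝ => (2*(m:ℝ)+3)*(1-x^2)^(m+1))).intervalIntegrable _ _)
      ((by fun_prop : Continuous (fun x : ℝ => (2*(m:ℝ)+2)*(1-x^2)^m)).intervalIntegrable _ _),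
      intervalIntegral.integral_const_mul, intervalIntegral.integral_const_mul, ih] at hint
    have h1 : ((Nat.factorial (2*m+1)):ℝ) ≠ 0 := Nat.cast_ne_zero.mpr (Nat.factorial_ne_zero _)
    have h3 : (2*(m:ℝ)+3) ≠ 0 := by positivity
    have key : (∫ x in (-1:ℝ)..1, (1-x^2)^(m+1)) =
        (2*(m:ℝ)+2)/(2*(m:ℝ)+3) * (2*4^m*((Nat.factorial m):ℝ)^2/((Nat.factorial (2*m+1)):ℝ)) := by
      field_simp at hint ⊢
      linarith [hint]
    rw [key]
    rw [show 2*(m+1)+1 = (2*m+1)+1+1 from by omega, Nat.factorial_succ ((2*m+1)+1),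
      Nat.factorial_succ (2*m+1), Nat.factorial_succ m]
    push_cast
    field_simp
    ring

noncomputable def cbv (q j : ℕ) : ℝ := (1/2) * Real.sqrt
      (((j:ℝ) * ((j:ℝ) + 2*(q:ℝ))) /
        (((j:ℝ) + (q:ℝ) - 1/2) * ((j:ℝ) + (q:ℝ) + 1/2)))

noncomputable def sco (q j : ℕ) : ℝ :=
  Real.sqrt ((2*(j:ℝ)+2*(q:ℝ)+1) * (Nat.factorial j) / (2 * (Nat.factorial (j+2*q))))

lemma eq_of_sq {x y : ℝ} (hx : 0 ≤ x) (hy : 0 ≤ y) (h : x^2 = y^2) : x = y := by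
  have h2 : (x-y)*(x+y) = 0 := by ring_nf; linarith
  rcases mul_eq_zero.mp h2 with h3 | h3
  · linarith
  · nlinarith

lemma cbv_zero (q : ℕ) : cbv q 0 = 0 := by
  simp [cbv]

lemma sco_nonneg (q j : ℕ) : 0 ≤ sco q j := Real.sqrt_nonneg _

lemma cbv_nonneg (q j : ℕ) : 0 ≤ cbv q j := by
  unfold cbv; positivity

lemma sco_sq (q j : ℕ) : (sco q j)^2 =
    (2*(j:ℝ)+2*(q:ℝ)+1) * (Nat.factorial j) / (2 * (Nat.factorial (j+2*q))) := by
  unfold sco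
  rw [Real.sq_sqrt]
  positivity

lemma sco_pos (q j : ℕ) : 0 < sco q j := by
  apply Real.sqrt_pos.mpr
  have h1 := Nat.factorial_pos j
  have h2 := Nat.factorial_pos (j+2*q)
  have h3 : (0:ℝ) < Nat.factorial j := by exact_mod_cast h1
  have h4 : (0:ℝ) < Nat.factorial (j+2*q) := by exact_mod_cast h2
  positivity

lemma half_denoms (q j : ℕ) :
    (0:ℝ) < (((j:ℝ)+1) + (q:ℝ) - 1/2) ∧ (0:ℝ) < (((j:ℝ)+1) + (q:ℝ) + 1/2) := by
  have h1 : (0:ℝ) ≤ (j:ℝ) := Nat.cast_nonneg j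
  have h2 : (0:ℝ) ≤ (q:ℝ) := Nat.cast_nonneg q
  constructor <;> linarith

lemma cbv_sq (q j : ℕ) : (cbv q (j+1))^2 =
    (((j:ℝ)+1) * (((j:ℝ)+1) + 2*(q:ℝ))) /
      ((2*(j:ℝ)+2*(q:ℝ)+1) * (2*(j:ℝ)+2*(q:ℝ)+3)) := by
  obtain ⟨hd1, hd2⟩ := half_denoms q j
  have hnum : (0:ℝ) ≤ ((j:ℝ)+1) * (((j:ℝ)+1) + 2*(q:ℝ)) := by positivity
  unfold cbv
  rw [mul_pow, Real.sq_sqrt (by push_cast; exact div_nonneg hnum (le_of_lt (mul_pos hd1 hd2)))]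
  have ha : (2*(j:ℝ)+2*(q:ℝ)+1) ≠ 0 := by positivity
  have hb : (2*(j:ℝ)+2*(q:ℝ)+3) ≠ 0 := by positivity
  push_cast
  have key : ∀ (N D1 D2 : ℝ), D1 ≠ 0 → D2 ≠ 0 → 4*D1 = D2 →
      (1/2:ℝ)^2 * (N/D1) = N/D2 := by
    intro N D1 D2 h1 h2 h3
    rw [← h3, div_mul_eq_div_div_swap, show ((1:ℝ)/2)^2 = 1/4 from by norm_num,
      mul_comm, mul_one_div]
  exact key _ _ _ (ne_of_gt (mul_pos (by push_cast at hd1 ⊢; linarith) (by push_cast at hd2 ⊢; linarith)))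
    (mul_ne_zero ha hb) (by ring)

lemma cbv_pos (q j : ℕ) : 0 < cbv q (j+1) := by
  obtain ⟨hd1, hd2⟩ := half_denoms q j
  unfold cbv
  have hrad : (0:ℝ) < (((j:ℝ)+1) * (((j:ℝ)+1) + 2*(q:ℝ))) /
      ((((j:ℝ)+1) + (q:ℝ) - 1/2) * (((j:ℝ)+1) + (q:ℝ) + 1/2)) := by
    have hnum : (0:ℝ) < ((j:ℝ)+1) * (((j:ℝ)+1) + 2*(q:ℝ)) := by positivity
    exact div_pos hnum (mul_pos hd1 hd2)
  have h5 : 0 < Real.sqrt ((((j:ℝ)+1) * (((j:ℝ)+1) + 2*(q:ℝ))) /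
      ((((j:ℝ)+1) + (q:ℝ) - 1/2) * (((j:ℝ)+1) + (q:ℝ) + 1/2))) := Real.sqrt_pos.mpr hrad
  push_cast
  linarith

lemma sco_succ_sq (q j : ℕ) : (sco q (j+1))^2 =
    ((2*(j:ℝ)+2*(q:ℝ)+3) * (((j:ℝ)+1) * (Nat.factorial j))) /
      (2 * ((((j:ℝ)+2*(q:ℝ))+1) * (Nat.factorial (j+2*q)))) := by
  rw [sco_sq]
  rw [show (j+1)+2*q = (j+2*q)+1 from by omega, Nat.factorial_succ (j+2*q), Nat.factorial_succ j]
  push_cast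
  ring_nf

lemma sqrtA (q j : ℕ) : cbv q (j+1) * sco q (j+1) * (2*(j:ℝ)+2*(q:ℝ)+1) =
    sco q j * ((j:ℝ)+1) := by
  apply eq_of_sq
  · have h1 : (0:ℝ) < 2*(j:ℝ)+2*(q:ℝ)+1 := by positivity
    have := cbv_nonneg q (j+1)
    have := sco_nonneg q (j+1)
    positivity
  · have := sco_nonneg q j
    positivity
  rw [mul_pow, mul_pow, mul_pow, cbv_sq, sco_succ_sq, sco_sq]
  have ha : (2*(j:ℝ)+2*(q:ℝ)+1) ≠ 0 := by positivity
  have hb : (2*(j:ℝ)+2*(q:ℝ)+3) ≠ 0 := by positivity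
  have hc : ((j:ℝ)+2*(q:ℝ))+1 ≠ 0 := by positivity
  have hf2 : ((Nat.factorial (j+2*q)):ℝ) ≠ 0 := Nat.cast_ne_zero.mpr (Nat.factorial_ne_zero _)
  set a := 2*(j:ℝ)+2*(q:ℝ)+1 with hadef
  set b := 2*(j:ℝ)+2*(q:ℝ)+3 with hbdef
  set c := (j:ℝ)+2*(q:ℝ)+1 with hcdef
  have hc : c ≠ 0 := by rw [hcdef]; positivity
  rw [show (j:ℝ)+1+2*(q:ℝ) = c from by rw [hcdef]; ring]
  field_simp

lemma sqrtB (q j : ℕ) : cbv q (j+1) * sco q j * (2*(j:ℝ)+2*(q:ℝ)+3) =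
    sco q (j+1) * ((j:ℝ)+1+2*(q:ℝ)) := by
  apply eq_of_sq
  · have h1 : (0:ℝ) < 2*(j:ℝ)+2*(q:ℝ)+3 := by positivity
    have := cbv_nonneg q (j+1)
    have := sco_nonneg q j
    positivity
  · have := sco_nonneg q (j+1)
    have h2 : (0:ℝ) ≤ (j:ℝ)+1+2*(q:ℝ) := by positivity
    positivity
  rw [mul_pow, mul_pow, mul_pow, cbv_sq, sco_succ_sq, sco_sq]
  have ha : (2*(j:ℝ)+2*(q:ℝ)+1) ≠ 0 := by positivity
  have hb : (2*(j:ℝ)+2*(q:ℝ)+3) ≠ 0 := by positivity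
  have hc : ((j:ℝ)+2*(q:ℝ))+1 ≠ 0 := by positivity
  have hf2 : ((Nat.factorial (j+2*q)):ℝ) ≠ 0 := Nat.cast_ne_zero.mpr (Nat.factorial_ne_zero _)
  field_simp
  ring

lemma baseConst (q : ℕ) : 1 / Real.sqrt (∫ x in (-1:ℝ)..1, (1 - x^2)^q) =
    sco q 0 * (((Nat.factorial q):ℝ) * ((Nat.factorial (2*q)):ℝ) /
      (2^q * ((Nat.factorial q):ℝ)^2)) := by
  rw [Ival q]
  have hfq : (0:ℝ) < ((Nat.factorial q):ℝ) := by exact_mod_cast Nat.factorial_pos q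
  have hf2q : (0:ℝ) < ((Nat.factorial (2*q)):ℝ) := by exact_mod_cast Nat.factorial_pos (2*q)
  have hf2q1 : (0:ℝ) < ((Nat.factorial (2*q+1)):ℝ) := by exact_mod_cast Nat.factorial_pos (2*q+1)
  have hI : (0:ℝ) < 2*4^q*((Nat.factorial q):ℝ)^2/((Nat.factorial (2*q+1)):ℝ) := by positivity
  apply eq_of_sq
  · positivity
  · have h1 := sco_nonneg q 0
    positivity
  rw [mul_pow, sco_sq, div_pow, one_pow, Real.sq_sqrt (le_of_lt hI)]
  rw [show (0+2*q) = 2*q from by omega]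
  rw [show Nat.factorial (2*q+1) = (2*q+1) * Nat.factorial (2*q) from Nat.factorial_succ (2*q)]
  have h4 : (4:ℝ)^q = 2^q * 2^q := by rw [← mul_pow]; norm_num
  have h2q : ((2:ℝ))^q ≠ 0 := by positivity
  rw [h4]
  push_cast
  field_simp
  ring

lemma pformula (cb : ℕ → ℕ → ℝ) (p : ℕ → ℕ → Polynomial ℝ)
    (hcb : ∀ q j, cb q j = cbv q j)
    (hp0 : ∀ q, p q 0 = C (1 / Real.sqrt (∫ x in (-1:ℝ)..1, (1 - x^2)^q)))
    (hrec : ∀ q j, X * p q j = C (cb q (j+1)) * p q (j+1) + C (cb q j) * p q (j-1)) :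
    ∀ q j, p q j = C (sco q j) * Zp (j+q) q := by
  intro q
  have base0 : p q 0 = C (sco q 0) * Zp (0+q) q := by
    rw [hp0 q, baseConst q, show (0+q) = q from by omega, ZqSelf q, ← map_mul]
  have base1 : p q 1 = C (sco q 1) * Zp (1+q) q := by
    have h := hrec q 0
    rw [hcb, hcb, cbv_zero, map_zero, zero_mul, add_zero] at h
    have hd := legDRec q q
    have hz : ((q:Polynomial ℝ)+(q:Polynomial ℝ)) * Zp (q-1) q = 0 := by
      cases q with
      | zero => simp
      | succ m => rw [Zp_high (m+1-1) (m+1) (by omega)]; ring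
    have hA := sqrtA q 0
    norm_num at hA
    have hA' := congrArg C hA
    simp only [map_mul, map_add, map_ofNat, map_one, cast_poly_C] at hA'
    have hmul : (C (cbv q 1) * (2*(q:Polynomial ℝ)+1)) ≠ 0 := by
      apply mul_ne_zero
      · rw [ne_eq, C_eq_zero]; exact ne_of_gt (cbv_pos q 0)
      · intro hh
        have h0 := congrArg (fun r => Polynomial.eval 0 r) hh
        simp at h0
        have : (0:ℝ) ≤ (q:ℝ) := Nat.cast_nonneg q
        linarith
    apply mul_left_cancel₀ hmul
    rw [show (1+q) = q+1 from by omega]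
    rw [base0, show (0+q) = q from by omega] at h
    linear_combination (-(2*(q:Polynomial ℝ)+1)) * h + C (sco q 0) * hd + C (sco q 0) * hz -
      Zp (q+1) q * hA'
  -- two-step induction
  have main : ∀ j, (p q j = C (sco q j) * Zp (j+q) q) ∧
      (p q (j+1) = C (sco q (j+1)) * Zp ((j+1)+q) q) := by
    intro j
    induction j with
    | zero => exact ⟨base0, base1⟩
    | succ m ih =>
      obtain ⟨ih1, ih2⟩ := ih
      refine ⟨ih2, ?_⟩
      have h := hrec q (m+1)
      rw [hcb, hcb, show (m+1)-1 = m from rfl] at h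
      have hd := legDRec q (m+q+1)
      have hA := sqrtA q (m+1)
      have hB := sqrtB q m
      push_cast at hA
      have hA' := congrArg C hA
      have hB' := congrArg C hB
      simp only [map_mul, map_add, map_ofNat, map_one, cast_poly_C] at hA' hB'
      have hmul : (C (cbv q (m+2)) * (2*(m:Polynomial ℝ)+2*(q:Polynomial ℝ)+3)) ≠ 0 := by
        apply mul_ne_zero
        · rw [ne_eq, C_eq_zero]; exact ne_of_gt (cbv_pos q (m+1))
        · intro hh
          have h0 := congrArg (fun r => Polynomial.eval 0 r) hh
          simp at h0
          have hq : (0:ℝ) ≤ (q:ℝ) := Nat.cast_nonneg q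
          have hm : (0:ℝ) ≤ (m:ℝ) := Nat.cast_nonneg m
          linarith
      apply mul_left_cancel₀ hmul
      rw [show (m+1+1)+q = (m+q+1)+1 from by omega]
      rw [show (m+1)+q = m+q+1 from by omega] at ih2
      rw [show (m+q+1)-1 = m+q from by omega] at hd
      push_cast at hd
      linear_combination (-(2*(m:Polynomial ℝ)+2*(q:Polynomial ℝ)+3)) * h +
        C (sco q (m+1)) * hd - (Zp ((m+q+1)+1) q) * hA' - (Zp (m+q) q) * hB' +
        (2*(m:Polynomial ℝ)+2*(q:Polynomial ℝ)+3) * X * ih2 -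
        (2*(m:Polynomial ℝ)+2*(q:Polynomial ℝ)+3) * C (cbv q (m+1)) * ih1
  intro j
  exact (main j).1

theorem stmt15
    (cb : ℕ → ℕ → ℝ)
    (hcb : ∀ q j : ℕ, cb q j = (1/2) * Real.sqrt
      (((j:ℝ) * ((j:ℝ) + 2*(q:ℝ))) /
        (((j:ℝ) + (q:ℝ) - 1/2) * ((j:ℝ) + (q:ℝ) + 1/2))))
    (p : ℕ → ℕ → Polynomial ℝ)
    (hp0 : ∀ q : ℕ, p q 0 =
      Polynomial.C (1 / Real.sqrt (∫ x in (-1:ℝ)..1, (1 - x^2)^q)))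
    (hrec : ∀ q j : ℕ, Polynomial.X * p q j =
      Polynomial.C (cb q (j+1)) * p q (j+1) + Polynomial.C (cb q j) * p q (j-1)) :
    ∀ n : ℕ, ∀ x ∈ Set.Icc (-1:ℝ) 1,
      (2*(n:ℝ)+1)/2 = ((p 0 n).eval x)^2 +
        2 * ∑ k ∈ Finset.Icc 1 n, (1 - x^2)^k * ((p k (n-k)).eval x)^2 := by
  have hcbv : ∀ q j, cb q j = cbv q j := by
    intro q j
    rw [hcb q j]
    rfl
  have hpf := pformula cb p hcbv hp0 hrec
  intro n x _
  have hfnk : ∀ k : ℕ, ((Nat.factorial (n+k)):ℝ) ≠ 0 :=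
    fun k => Nat.cast_ne_zero.mpr (Nat.factorial_ne_zero _)
  -- head term
  have hA : ((p 0 n).eval x)^2 =
      (2*(n:ℝ)+1)/2 * (gam n 0 * ((1-x^2)^0 * ((Zp n 0).eval x)^2)) := by
    rw [hpf 0 n, show n+0 = n from by omega]
    rw [eval_mul, eval_C, mul_pow, sco_sq 0 n]
    rw [show n+2*0 = n from by omega]
    unfold gam
    simp only [if_pos rfl, Nat.sub_zero, Nat.add_zero, pow_zero, one_mul]
    push_cast
    field_simp
    ring
  -- tail terms
  have hsum : ∀ i ∈ Finset.range n, (1-x^2)^(1+i) * ((p (1+i) (n-(1+i))).eval x)^2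
      = ((2*(n:ℝ)+1)/4) * (gam n (i+1) * ((1-x^2)^(i+1) * ((Zp n (i+1)).eval x)^2)) := by
    intro i hi
    have hin : i < n := Finset.mem_range.mp hi
    rw [show 1+i = i+1 from by omega]
    rw [hpf (i+1) (n-(i+1)), show (n-(i+1))+(i+1) = n from by omega]
    rw [eval_mul, eval_C, mul_pow, sco_sq (i+1) (n-(i+1))]
    rw [show (n-(i+1))+2*(i+1) = n+(i+1) from by omega]
    unfold gam
    simp only [Nat.succ_ne_zero, if_neg, if_false]
    have hcast : ((n-(i+1) : ℕ) : ℝ) = (n:ℝ) - ((i:ℝ)+1) := by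
      rw [Nat.cast_sub (by omega)]
      push_cast
      ring
    rw [hcast]
    have := hfnk (i+1)
    push_cast at this ⊢
    field_simp
    ring
  -- assemble
  have hT := G_eval n x
  rw [Finset.sum_range_succ'] at hT
  rw [show Finset.Icc 1 n = Finset.Ico 1 (n+1) from by rw [Finset.Ico_add_one_right_eq_Icc],
    Finset.sum_Ico_eq_sum_range, show n+1-1 = n from by omega]
  rw [Finset.sum_congr rfl hsum, ← Finset.mul_sum, hA]
  linear_combination (-(2*(n:ℝ)+1)/2) * hT
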